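/- Suppose f, g, h are non-negative continuous functions on (0,t] with f differentiable, and (d/ds) f(s) + g(s) ≤ h(s) for all 0 < s ≤ t. Let b < 1 be a real number and assume ∫₀ᵗ s^{-b} f(s) ds < ∞. Then t^{1-b} f(t) + ∫₀ᵗ s^{1-b} g(s) ds ≤ ∫₀ᵗ s^{1-b} h(s) ds + (1-b) ∫₀ᵗ s^{-b} f(s) ds, the integrals being interpreted in [0,∞]; moreover if equality holds in the differential inequality on (0,t] then equality holds in the conclusion. -/

import Mathlib

open MeasureTheory


section AuxLemmas
open Set Filter Topology




-- per-epsilon core lemma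
lemma aux_core_le (t ε b : ℝ) (hε : 0 < ε) (hεt : ε < t) (f g h f' : ℝ → ℝ)
    (hfc : ContinuousOn f (Set.Ioc 0 t))
    (hgc : ContinuousOn g (Set.Ioc 0 t))
    (hhc : ContinuousOn h (Set.Ioc 0 t))
    (hderiv : ∀ s ∈ Set.Ioc (0:ℝ) t, HasDerivWithinAt f (f' s) (Set.Ioc 0 t) s)
    (hineq : ∀ s ∈ Set.Ioc (0:ℝ) t, f' s + g s ≤ h s) :
    t ^ (1-b) * f t - ε ^ (1-b) * f ε ≤
      ∫ s in Set.Ioc ε t, (s ^ (1-b) * (h s - g s) + (1-b) * (s ^ (-b) * f s)) := by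
  have hsub : Set.Icc ε t ⊆ Set.Ioc 0 t := fun x hx => ⟨hε.trans_le hx.1, hx.2⟩
  have hrpc : ∀ p : ℝ, ContinuousOn (fun s : ℝ => s ^ p) (Set.Ioc 0 t) := fun p =>
    ContinuousOn.rpow_const continuousOn_id (fun x hx => Or.inl hx.1.ne')
  have hψc : ContinuousOn (fun s => s ^ (1-b) * (h s - g s) + (1-b) * (s ^ (-b) * f s))
      (Set.Ioc 0 t) := (((hrpc (1-b)).mul (hhc.sub hgc)).add
        (((hrpc (-b)).mul hfc).const_smul (1-b)))
  have hψint : IntegrableOn (fun s => s ^ (1-b) * (h s - g s) + (1-b) * (s ^ (-b) * f s))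
      (Set.Icc ε t) := (hψc.mono hsub).integrableOn_compact isCompact_Icc
  have hFc : ContinuousOn (fun s => s ^ (1-b) * f s) (Set.Icc ε t) :=
    ((hrpc (1-b)).mul hfc).mono hsub
  have hFd : ∀ x ∈ Set.Ioo ε t, HasDerivWithinAt (fun s => s ^ (1-b) * f s)
      ((1-b) * x ^ (-b) * f x + x ^ (1-b) * f' x) (Set.Ioi x) x := by
    intro x hx
    have hx0 : 0 < x := hε.trans hx.1
    have hxm : x ∈ Set.Ioc (0:ℝ) t := ⟨hx0, hx.2.le⟩
    have hf' : HasDerivAt f (f' x) x :=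
      (hderiv x hxm).hasDerivAt (Ioc_mem_nhds hx0 hx.2)
    have hr : HasDerivAt (fun s : ℝ => s ^ (1-b)) ((1-b) * x ^ (1-b-1)) x :=
      Real.hasDerivAt_rpow_const (Or.inl hx0.ne')
    have := hr.mul hf'
    rw [show (1:ℝ)-b-1 = -b by ring] at this
    exact this.hasDerivWithinAt
  have key := intervalIntegral.sub_le_integral_of_hasDeriv_right_of_le hεt.le hFc hFd hψint
    (fun x hx => by
      have hx0 : 0 < x := hε.trans hx.1
      have hxm : x ∈ Set.Ioc (0:ℝ) t := ⟨hx0, hx.2.le⟩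
      have h1 : f' x ≤ h x - g x := by linarith [hineq x hxm]
      have h2 : (0:ℝ) ≤ x ^ (1-b) := Real.rpow_nonneg hx0.le _
      nlinarith [mul_le_mul_of_nonneg_left h1 h2])
  rwa [intervalIntegral.integral_of_le hεt.le] at key

lemma aux_core_eq (t ε b : ℝ) (hε : 0 < ε) (hεt : ε < t) (f g h f' : ℝ → ℝ)
    (hfc : ContinuousOn f (Set.Ioc 0 t))
    (hgc : ContinuousOn g (Set.Ioc 0 t))
    (hhc : ContinuousOn h (Set.Ioc 0 t))
    (hderiv : ∀ s ∈ Set.Ioc (0:ℝ) t, HasDerivWithinAt f (f' s) (Set.Ioc 0 t) s)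
    (heq : ∀ s ∈ Set.Ioc (0:ℝ) t, f' s + g s = h s) :
    t ^ (1-b) * f t - ε ^ (1-b) * f ε =
      ∫ s in Set.Ioc ε t, (s ^ (1-b) * (h s - g s) + (1-b) * (s ^ (-b) * f s)) := by
  have hsub : Set.Icc ε t ⊆ Set.Ioc 0 t := fun x hx => ⟨hε.trans_le hx.1, hx.2⟩
  have hrpc : ∀ p : ℝ, ContinuousOn (fun s : ℝ => s ^ p) (Set.Ioc 0 t) := fun p =>
    ContinuousOn.rpow_const continuousOn_id (fun x hx => Or.inl hx.1.ne')
  have hψc : ContinuousOn (fun s => s ^ (1-b) * (h s - g s) + (1-b) * (s ^ (-b) * f s))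
      (Set.Ioc 0 t) := (((hrpc (1-b)).mul (hhc.sub hgc)).add
        (((hrpc (-b)).mul hfc).const_smul (1-b)))
  have hψint : IntegrableOn (fun s => s ^ (1-b) * (h s - g s) + (1-b) * (s ^ (-b) * f s))
      (Set.Icc ε t) := (hψc.mono hsub).integrableOn_compact isCompact_Icc
  have hFc : ContinuousOn (fun s => s ^ (1-b) * f s) (Set.Icc ε t) :=
    ((hrpc (1-b)).mul hfc).mono hsub
  have hFd : ∀ x ∈ Set.Ioo ε t, HasDerivWithinAt (fun s => s ^ (1-b) * f s)
      (x ^ (1-b) * (h x - g x) + (1-b) * (x ^ (-b) * f x)) (Set.Ioi x) x := by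
    intro x hx
    have hx0 : 0 < x := hε.trans hx.1
    have hxm : x ∈ Set.Ioc (0:ℝ) t := ⟨hx0, hx.2.le⟩
    have hf' : HasDerivAt f (f' x) x :=
      (hderiv x hxm).hasDerivAt (Ioc_mem_nhds hx0 hx.2)
    have hr : HasDerivAt (fun s : ℝ => s ^ (1-b)) ((1-b) * x ^ (1-b-1)) x :=
      Real.hasDerivAt_rpow_const (Or.inl hx0.ne')
    have h2 := hr.mul hf'
    rw [show (1:ℝ)-b-1 = -b by ring] at h2
    have h3 : f' x = h x - g x := by linarith [heq x hxm]
    have : (1-b) * x ^ (-b) * f x + x ^ (1-b) * f' x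
        = x ^ (1-b) * (h x - g x) + (1-b) * (x ^ (-b) * f x) := by rw [h3]; ring
    rw [this] at h2
    exact h2.hasDerivWithinAt
  have key := intervalIntegral.integral_eq_sub_of_hasDeriv_right_of_le_real hεt.le hFc hFd hψint
  rw [intervalIntegral.integral_of_le hεt.le] at key
  exact key.symm


lemma aux_intble (t ε p : ℝ) (hε : 0 < ε) (g : ℝ → ℝ)
    (hgc : ContinuousOn g (Set.Ioc 0 t)) :
    IntegrableOn (fun s => s ^ p * g s) (Set.Ioc ε t) := by
  rcases le_or_gt ε t with hεt | hεt
  · have hsub : Set.Icc ε t ⊆ Set.Ioc 0 t := fun x hx => ⟨hε.trans_le hx.1, hx.2⟩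
    have hc : ContinuousOn (fun s => s ^ p * g s) (Set.Icc ε t) :=
      ((ContinuousOn.rpow_const continuousOn_id
        (fun x hx => Or.inl (hε.trans_le hx.1).ne')).mul (hgc.mono hsub))
    exact (hc.integrableOn_compact isCompact_Icc).mono_set Set.Ioc_subset_Icc_self
  · rw [Set.Ioc_eq_empty (by linarith)]
    simp [IntegrableOn]

lemma aux_split (t ε b : ℝ) (hε : 0 < ε) (f g h : ℝ → ℝ)
    (hfc : ContinuousOn f (Set.Ioc 0 t))
    (hgc : ContinuousOn g (Set.Ioc 0 t))
    (hhc : ContinuousOn h (Set.Ioc 0 t)) :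
    ∫ s in Set.Ioc ε t, (s ^ (1-b) * (h s - g s) + (1-b) * (s ^ (-b) * f s)) =
      (∫ s in Set.Ioc ε t, s ^ (1-b) * h s) - (∫ s in Set.Ioc ε t, s ^ (1-b) * g s)
        + (1-b) * ∫ s in Set.Ioc ε t, s ^ (-b) * f s := by
  have hih := aux_intble t ε (1-b) hε h hhc
  have hig := aux_intble t ε (1-b) hε g hgc
  have hif := aux_intble t ε (-b) hε f hfc
  have : ∀ s : ℝ, s ^ (1-b) * (h s - g s) + (1-b) * (s ^ (-b) * f s)
      = (s ^ (1-b) * h s - s ^ (1-b) * g s) + (1-b) * (s ^ (-b) * f s) := fun s => by ring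
  have hsub2 : IntegrableOn (fun s => s ^ (1-b) * h s - s ^ (1-b) * g s) (Set.Ioc ε t) :=
    hih.sub hig
  have hcm : IntegrableOn (fun s => (1-b) * (s ^ (-b) * f s)) (Set.Ioc ε t) :=
    hif.const_mul (1-b)
  rw [← integral_const_mul (1-b), ← integral_sub hih hig, ← integral_add hsub2 hcm]
  refine integral_congr_ae (Filter.Eventually.of_forall fun s => ?_)
  simp only [Pi.sub_apply, Pi.add_apply]
  ring

-- existence of small ε with small boundary term
lemma aux_small (t b : ℝ) (ht : 0 < t) (hb : b < 1) (f : ℝ → ℝ)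
    (hf0 : ∀ s ∈ Set.Ioc (0:ℝ) t, 0 ≤ f s)
    (hint : IntegrableOn (fun s => s ^ (-b) * f s) (Set.Ioc 0 t))
    (c d : ℝ) (hc : 0 < c) (hd : 0 < d) :
    ∃ ε : ℝ, 0 < ε ∧ ε < min d t ∧ ε ^ (1-b) * f ε < c := by
  by_contra hcon
  push_neg at hcon
  set δ := min d t with hδ
  have hδ0 : 0 < δ := lt_min hd ht
  have hδt : δ ≤ t := min_le_right _ _
  have hbound : ∀ s ∈ Set.Ioo (0:ℝ) δ, ‖c * s ^ (-1:ℝ)‖ ≤ s ^ (-b) * f s := by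
    intro s hs
    have hs0 : 0 < s := hs.1
    have h1 : c ≤ s ^ (1-b) * f s := hcon s hs0 hs.2
    have h2 : (0:ℝ) < s ^ (-1:ℝ) := Real.rpow_pos_of_pos hs0 _
    have h3 : s ^ (-1:ℝ) * (s ^ (1-b) * f s) = s ^ (-b) * f s := by
      rw [← mul_assoc, ← Real.rpow_add hs0, show (-1:ℝ)+(1-b) = -b by ring]
    rw [Real.norm_of_nonneg (by positivity)]
    calc c * s ^ (-1:ℝ) ≤ s ^ (-1:ℝ) * (s ^ (1-b) * f s) := by nlinarith
      _ = s ^ (-b) * f s := h3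
  have hmono : IntegrableOn (fun s => s ^ (-b) * f s) (Set.Ioo 0 δ) :=
    hint.mono_set (fun x hx => ⟨hx.1, hx.2.le.trans hδt⟩)
  have hmeas : AEStronglyMeasurable (fun s : ℝ => c * s ^ (-1:ℝ))
      (volume.restrict (Set.Ioo 0 δ)) := by
    apply ContinuousOn.aestronglyMeasurable _ measurableSet_Ioo
    exact (continuousOn_const.mul (ContinuousOn.rpow_const continuousOn_id
      (fun x hx => Or.inl hx.1.ne')))
  have hci : IntegrableOn (fun s : ℝ => c * s ^ (-1:ℝ)) (Set.Ioo 0 δ) := by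
    apply Integrable.mono' hmono hmeas
    rw [ae_restrict_iff' measurableSet_Ioo]
    exact .of_forall hbound
  have hri : IntegrableOn (fun s : ℝ => s ^ (-1:ℝ)) (Set.Ioo 0 δ) := by
    have := hci.const_mul c⁻¹
    simpa [← mul_assoc, inv_mul_cancel₀ hc.ne', IntegrableOn] using this
  rw [intervalIntegral.integrableOn_Ioo_rpow_iff hδ0] at hri
  linarith


lemma aux_cover (t : ℝ) (ht : 0 < t) :
    AECover (volume.restrict (Set.Ioc (0:ℝ) t)) Filter.atTop
      (fun n : ℕ => Set.Ioc (1/(n+1) : ℝ) t) := by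
  constructor
  · filter_upwards [ae_restrict_mem measurableSet_Ioc] with x hx
    obtain ⟨n₀, hn₀⟩ := exists_nat_one_div_lt hx.1
    rw [Filter.eventually_atTop]
    refine ⟨n₀, fun n hn => ⟨lt_of_le_of_lt ?_ hn₀, hx.2⟩⟩
    apply one_div_le_one_div_of_le (by positivity)
    exact_mod_cast by exact_mod_cast add_le_add_left (Nat.cast_le.mpr hn) 1
  · exact fun n => measurableSet_Ioc

lemma aux_restrict (t δ : ℝ) (hδ : 0 < δ) (φ : ℝ → ENNReal) :
    ∫⁻ s in Set.Ioc δ t, φ s ∂(volume.restrict (Set.Ioc (0:ℝ) t))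
      = ∫⁻ s in Set.Ioc δ t, φ s := by
  rw [Measure.restrict_restrict measurableSet_Ioc,
    Set.inter_eq_self_of_subset_left (Set.Ioc_subset_Ioc_left hδ.le)]

lemma aux_ltend (t : ℝ) (ht : 0 < t) (φ : ℝ → ℝ)
    (hφc : ContinuousOn φ (Set.Ioc 0 t)) :
    Filter.Tendsto (fun n : ℕ => ∫⁻ s in Set.Ioc (1/(n+1):ℝ) t, ENNReal.ofReal (φ s))
      Filter.atTop (𝓝 (∫⁻ s in Set.Ioc (0:ℝ) t, ENNReal.ofReal (φ s))) := by
  have hm : AEMeasurable (fun s => ENNReal.ofReal (φ s))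
      (volume.restrict (Set.Ioc (0:ℝ) t)) :=
    ENNReal.measurable_ofReal.comp_aemeasurable (hφc.aemeasurable measurableSet_Ioc)
  refine Filter.Tendsto.congr (fun n => ?_) ((aux_cover t ht).lintegral_tendsto_of_countably_generated hm)
  exact aux_restrict t _ (by positivity) _

lemma aux_rtend (t : ℝ) (ht : 0 < t) (φ : ℝ → ℝ)
    (hi : IntegrableOn φ (Set.Ioc (0:ℝ) t)) :
    Filter.Tendsto (fun n : ℕ => ∫ s in Set.Ioc (1/(n+1):ℝ) t, φ s)
      Filter.atTop (𝓝 (∫ s in Set.Ioc (0:ℝ) t, φ s)) := by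
  have := (aux_cover t ht).integral_tendsto_of_countably_generated hi
  have he : ∀ n : ℕ, ∫ s in Set.Ioc (1/(n+1):ℝ) t, φ s ∂(volume.restrict (Set.Ioc (0:ℝ) t))
      = ∫ s in Set.Ioc (1/(n+1):ℝ) t, φ s := by
    intro n
    rw [Measure.restrict_restrict measurableSet_Ioc,
      Set.inter_eq_self_of_subset_left (Set.Ioc_subset_Ioc_left (by positivity))]
  simpa only [he] using this


lemma aux_ofReal (t ε p : ℝ) (hε : 0 < ε) (g : ℝ → ℝ)
    (hgc : ContinuousOn g (Set.Ioc 0 t)) (hg0 : ∀ s ∈ Set.Ioc (0:ℝ) t, 0 ≤ g s) :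
    ∫⁻ s in Set.Ioc ε t, ENNReal.ofReal (s ^ p * g s)
      = ENNReal.ofReal (∫ s in Set.Ioc ε t, s ^ p * g s) := by
  rcases le_or_gt ε t with hεt | hεt
  · rw [← ofReal_integral_eq_lintegral_ofReal (aux_intble t ε p hε g hgc)]
    filter_upwards [ae_restrict_mem measurableSet_Ioc] with x hx
    exact mul_nonneg (Real.rpow_nonneg (hε.trans hx.1).le _)
      (hg0 x ⟨hε.trans hx.1, hx.2⟩)
  · rw [Set.Ioc_eq_empty (by linarith)]
    simp


end AuxLemmas

open Set Filter Topology in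
/-- Lemma 4.7 (initial behavior from differential inequalities): if `f, g, h ≥ 0` are
continuous on `(0,t]`, `f` is differentiable with derivative `f'` satisfying
`f' + g ≤ h` on `(0,t]`, `b < 1` and `∫₀ᵗ s^{-b} f(s) ds < ∞`, then
`t^{1-b} f(t) + ∫₀ᵗ s^{1-b} g(s) ds ≤ ∫₀ᵗ s^{1-b} h(s) ds + (1-b) ∫₀ᵗ s^{-b} f(s) ds`,
the `g`- and `h`-integrals being interpreted in `[0,∞]`; with equality if `f' + g = h`. -/
theorem initial_behavior_from_differential_inequality
    (t : ℝ) (ht : 0 < t) (f g h f' : ℝ → ℝ)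
    (hf0 : ∀ s ∈ Set.Ioc (0:ℝ) t, 0 ≤ f s)
    (hg0 : ∀ s ∈ Set.Ioc (0:ℝ) t, 0 ≤ g s)
    (hh0 : ∀ s ∈ Set.Ioc (0:ℝ) t, 0 ≤ h s)
    (hfc : ContinuousOn f (Set.Ioc 0 t))
    (hgc : ContinuousOn g (Set.Ioc 0 t))
    (hhc : ContinuousOn h (Set.Ioc 0 t))
    (hderiv : ∀ s ∈ Set.Ioc (0:ℝ) t, HasDerivWithinAt f (f' s) (Set.Ioc 0 t) s)
    (hineq : ∀ s ∈ Set.Ioc (0:ℝ) t, f' s + g s ≤ h s)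
    (b : ℝ) (hb : b < 1)
    (hint : IntegrableOn (fun s => s ^ (-b) * f s) (Set.Ioc 0 t)) :
    (ENNReal.ofReal (t ^ (1 - b) * f t)
        + ∫⁻ s in Set.Ioc (0:ℝ) t, ENNReal.ofReal (s ^ (1 - b) * g s) ≤
      (∫⁻ s in Set.Ioc (0:ℝ) t, ENNReal.ofReal (s ^ (1 - b) * h s))
        + ENNReal.ofReal ((1 - b) * ∫ s in Set.Ioc (0:ℝ) t, s ^ (-b) * f s))
    ∧ ((∀ s ∈ Set.Ioc (0:ℝ) t, f' s + g s = h s) →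
      ENNReal.ofReal (t ^ (1 - b) * f t)
          + ∫⁻ s in Set.Ioc (0:ℝ) t, ENNReal.ofReal (s ^ (1 - b) * g s) =
        (∫⁻ s in Set.Ioc (0:ℝ) t, ENNReal.ofReal (s ^ (1 - b) * h s))
          + ENNReal.ofReal ((1 - b) * ∫ s in Set.Ioc (0:ℝ) t, s ^ (-b) * f s)) := by
  have hb' : (0:ℝ) < 1 - b := by linarith
  -- continuity of weighted integrands
  have hrpc : ∀ p : ℝ, ContinuousOn (fun s : ℝ => s ^ p) (Set.Ioc 0 t) := fun p =>
    ContinuousOn.rpow_const continuousOn_id (fun x hx => Or.inl hx.1.ne')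
  have hGc : ContinuousOn (fun s => s ^ (1-b) * g s) (Set.Ioc 0 t) := (hrpc _).mul hgc
  have hHc : ContinuousOn (fun s => s ^ (1-b) * h s) (Set.Ioc 0 t) := (hrpc _).mul hhc
  -- nonnegativity facts
  have hFt : 0 ≤ t ^ (1-b) * f t :=
    mul_nonneg (Real.rpow_nonneg ht.le _) (hf0 t ⟨ht, le_refl t⟩)
  have hG0 : ∀ s ∈ Set.Ioc (0:ℝ) t, 0 ≤ s ^ (1-b) * g s := fun s hs =>
    mul_nonneg (Real.rpow_nonneg hs.1.le _) (hg0 s hs)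
  have hH0 : ∀ s ∈ Set.Ioc (0:ℝ) t, 0 ≤ s ^ (1-b) * h s := fun s hs =>
    mul_nonneg (Real.rpow_nonneg hs.1.le _) (hh0 s hs)
  have hF0 : ∀ s ∈ Set.Ioc (0:ℝ) t, 0 ≤ s ^ (-b) * f s := fun s hs =>
    mul_nonneg (Real.rpow_nonneg hs.1.le _) (hf0 s hs)
  have hIg : ∀ ε : ℝ, 0 < ε → 0 ≤ ∫ s in Set.Ioc ε t, s ^ (1-b) * g s := fun ε hε =>
    setIntegral_nonneg measurableSet_Ioc (fun x hx => hG0 x ⟨hε.trans hx.1, hx.2⟩)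
  have hIh : ∀ ε : ℝ, 0 < ε → 0 ≤ ∫ s in Set.Ioc ε t, s ^ (1-b) * h s := fun ε hε =>
    setIntegral_nonneg measurableSet_Ioc (fun x hx => hH0 x ⟨hε.trans hx.1, hx.2⟩)
  have hIftot : 0 ≤ ∫ s in Set.Ioc (0:ℝ) t, s ^ (-b) * f s :=
    setIntegral_nonneg measurableSet_Ioc hF0
  -- monotone bound for the f-integral
  have hfmono : ∀ ε : ℝ, 0 < ε →
      (∫ s in Set.Ioc ε t, s ^ (-b) * f s) ≤ ∫ s in Set.Ioc (0:ℝ) t, s ^ (-b) * f s := by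
    intro ε hε
    apply setIntegral_mono_set hint
    · filter_upwards [ae_restrict_mem measurableSet_Ioc] with x hx using hF0 x hx
    · exact .of_forall (Set.Ioc_subset_Ioc_left hε.le)
  -- combined per-ε inequality
  have key_le : ∀ ε : ℝ, 0 < ε → ε < t →
      t ^ (1-b) * f t + ∫ s in Set.Ioc ε t, s ^ (1-b) * g s ≤
        ε ^ (1-b) * f ε + (∫ s in Set.Ioc ε t, s ^ (1-b) * h s)
          + (1-b) * ∫ s in Set.Ioc ε t, s ^ (-b) * f s := by
    intro ε hε hεt
    have h1 := aux_core_le t ε b hε hεt f g h f' hfc hgc hhc hderiv hineq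
    rw [aux_split t ε b hε f g h hfc hgc hhc] at h1
    linarith
  -- main inequality
  have part1 : ENNReal.ofReal (t ^ (1 - b) * f t)
      + (∫⁻ s in Set.Ioc (0:ℝ) t, ENNReal.ofReal (s ^ (1 - b) * g s)) ≤
      (∫⁻ s in Set.Ioc (0:ℝ) t, ENNReal.ofReal (s ^ (1 - b) * h s))
        + ENNReal.ofReal ((1 - b) * ∫ s in Set.Ioc (0:ℝ) t, s ^ (-b) * f s) := by
    refine le_of_tendsto' (Filter.Tendsto.const_add (ENNReal.ofReal (t ^ (1-b) * f t))
      (aux_ltend t ht _ hGc)) (fun n => ?_)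
    apply ENNReal.le_of_forall_pos_le_add
    intro η hη _
    have hδ : (0:ℝ) < 1/(n+1) := by positivity
    obtain ⟨ε, hε0, hεlt, hεF⟩ := aux_small t b ht hb f hf0 hint (η:ℝ) (1/(n+1):ℝ)
      (by exact_mod_cast hη) hδ
    have hεt : ε < t := hεlt.trans_le (min_le_right _ _)
    have hεδ : ε < 1/(n+1) := hεlt.trans_le (min_le_left _ _)
    calc ENNReal.ofReal (t ^ (1-b) * f t)
          + ∫⁻ s in Set.Ioc (1/(n+1):ℝ) t, ENNReal.ofReal (s ^ (1-b) * g s)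
        ≤ ENNReal.ofReal (t ^ (1-b) * f t)
          + ∫⁻ s in Set.Ioc ε t, ENNReal.ofReal (s ^ (1-b) * g s) :=
          add_le_add_right (lintegral_mono_set (Set.Ioc_subset_Ioc_left hεδ.le)) _
      _ = ENNReal.ofReal (t ^ (1-b) * f t + ∫ s in Set.Ioc ε t, s ^ (1-b) * g s) := by
          rw [aux_ofReal t ε (1-b) hε0 g hgc hg0, ← ENNReal.ofReal_add hFt (hIg ε hε0)]
      _ ≤ ENNReal.ofReal (ε ^ (1-b) * f ε + (∫ s in Set.Ioc ε t, s ^ (1-b) * h s)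
            + (1-b) * ∫ s in Set.Ioc ε t, s ^ (-b) * f s) :=
          ENNReal.ofReal_le_ofReal (key_le ε hε0 hεt)
      _ ≤ ENNReal.ofReal ((∫ s in Set.Ioc ε t, s ^ (1-b) * h s)
            + (1-b) * (∫ s in Set.Ioc (0:ℝ) t, s ^ (-b) * f s) + (η:ℝ)) := by
          apply ENNReal.ofReal_le_ofReal
          have h2 := hfmono ε hε0
          nlinarith
      _ = ENNReal.ofReal (∫ s in Set.Ioc ε t, s ^ (1-b) * h s)
            + ENNReal.ofReal ((1-b) * ∫ s in Set.Ioc (0:ℝ) t, s ^ (-b) * f s)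
            + ENNReal.ofReal (η:ℝ) := by
          rw [ENNReal.ofReal_add (add_nonneg (hIh ε hε0)
              (mul_nonneg hb'.le hIftot)) NNReal.zero_le_coe,
            ENNReal.ofReal_add (hIh ε hε0) (mul_nonneg hb'.le hIftot)]
      _ ≤ (∫⁻ s in Set.Ioc (0:ℝ) t, ENNReal.ofReal (s ^ (1-b) * h s))
            + ENNReal.ofReal ((1-b) * ∫ s in Set.Ioc (0:ℝ) t, s ^ (-b) * f s) + η := by
          rw [← aux_ofReal t ε (1-b) hε0 h hhc hh0, ENNReal.ofReal_coe_nnreal]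
          exact add_le_add_left (add_le_add_left
            (lintegral_mono_set (Set.Ioc_subset_Ioc_left hε0.le)) _) _
  refine ⟨part1, fun heq => le_antisymm part1 ?_⟩
  -- reverse inequality in the equality case
  have key_eq : ∀ ε : ℝ, 0 < ε → ε < t →
      t ^ (1-b) * f t - ε ^ (1-b) * f ε =
        (∫ s in Set.Ioc ε t, s ^ (1-b) * h s) - (∫ s in Set.Ioc ε t, s ^ (1-b) * g s)
          + (1-b) * ∫ s in Set.Ioc ε t, s ^ (-b) * f s := by
    intro ε hε hεt
    have h1 := aux_core_eq t ε b hε hεt f g h f' hfc hgc hhc hderiv heq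
    rw [aux_split t ε b hε f g h hfc hgc hhc] at h1
    linarith
  refine le_of_tendsto' (Filter.Tendsto.add_const
      (ENNReal.ofReal ((1 - b) * ∫ s in Set.Ioc (0:ℝ) t, s ^ (-b) * f s))
      (aux_ltend t ht _ hHc)) (fun n => ?_)
  apply ENNReal.le_of_forall_pos_le_add
  intro η hη _
  have hη' : (0:ℝ) < η := by exact_mod_cast hη
  have hδ : (0:ℝ) < min (1/(n+1):ℝ) t := lt_min (by positivity) ht
  -- choose ε = 1/(m+1) small with small f-integral tail
  have htendf := aux_rtend t ht _ hint
  have hev1 : ∀ᶠ m : ℕ in atTop,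
      (∫ s in Set.Ioc (0:ℝ) t, s ^ (-b) * f s) - η/(1-b)
        < ∫ s in Set.Ioc (1/(m+1):ℝ) t, s ^ (-b) * f s :=
    htendf.eventually (eventually_gt_nhds (by
      have : 0 < (η:ℝ)/(1-b) := by positivity
      linarith))
  have hev2 : ∀ᶠ m : ℕ in atTop, (1/(m+1):ℝ) < min (1/(n+1):ℝ) t := by
    obtain ⟨m₀, hm₀⟩ := exists_nat_one_div_lt hδ
    rw [Filter.eventually_atTop]
    refine ⟨m₀, fun m hm => lt_of_le_of_lt ?_ hm₀⟩
    apply one_div_le_one_div_of_le (by positivity)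
    exact_mod_cast add_le_add_left (Nat.cast_le.mpr hm) 1
  obtain ⟨m, hm1, hm2⟩ := (hev1.and hev2).exists
  set ε : ℝ := 1/(m+1) with hεdef
  have hε0 : (0:ℝ) < ε := by positivity
  have hεt : ε < t := hm2.trans_le (min_le_right _ _)
  have hεδ : ε < 1/(n+1) := hm2.trans_le (min_le_left _ _)
  have hFε : 0 ≤ ε ^ (1-b) * f ε :=
    mul_nonneg (Real.rpow_nonneg hε0.le _) (hf0 ε ⟨hε0, hεt.le⟩)
  have hkey := key_eq ε hε0 hεt
  have htail : (1-b) * ((∫ s in Set.Ioc (0:ℝ) t, s ^ (-b) * f s)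
      - ∫ s in Set.Ioc ε t, s ^ (-b) * f s) < η := by
    have h2 : (∫ s in Set.Ioc (0:ℝ) t, s ^ (-b) * f s)
        - (∫ s in Set.Ioc ε t, s ^ (-b) * f s) < η/(1-b) := by linarith [hm1]
    calc (1-b) * ((∫ s in Set.Ioc (0:ℝ) t, s ^ (-b) * f s)
          - ∫ s in Set.Ioc ε t, s ^ (-b) * f s) < (1-b) * (η/(1-b)) := by
          apply mul_lt_mul_of_pos_left h2 hb'
      _ = η := by field_simp
  have hreal : (∫ s in Set.Ioc ε t, s ^ (1-b) * h s)
      + (1-b) * (∫ s in Set.Ioc (0:ℝ) t, s ^ (-b) * f s)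
      ≤ t ^ (1-b) * f t + (∫ s in Set.Ioc ε t, s ^ (1-b) * g s) + η := by linarith
  calc (∫⁻ s in Set.Ioc (1/(n+1):ℝ) t, ENNReal.ofReal (s ^ (1-b) * h s))
        + ENNReal.ofReal ((1 - b) * ∫ s in Set.Ioc (0:ℝ) t, s ^ (-b) * f s)
      ≤ (∫⁻ s in Set.Ioc ε t, ENNReal.ofReal (s ^ (1-b) * h s))
        + ENNReal.ofReal ((1 - b) * ∫ s in Set.Ioc (0:ℝ) t, s ^ (-b) * f s) :=
        add_le_add_left (lintegral_mono_set (Set.Ioc_subset_Ioc_left hεδ.le)) _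
    _ = ENNReal.ofReal ((∫ s in Set.Ioc ε t, s ^ (1-b) * h s)
          + (1 - b) * ∫ s in Set.Ioc (0:ℝ) t, s ^ (-b) * f s) := by
        rw [aux_ofReal t ε (1-b) hε0 h hhc hh0,
          ← ENNReal.ofReal_add (hIh ε hε0) (mul_nonneg hb'.le hIftot)]
    _ ≤ ENNReal.ofReal (t ^ (1-b) * f t + (∫ s in Set.Ioc ε t, s ^ (1-b) * g s) + η) :=
        ENNReal.ofReal_le_ofReal hreal
    _ = ENNReal.ofReal (t ^ (1-b) * f t)
          + ENNReal.ofReal (∫ s in Set.Ioc ε t, s ^ (1-b) * g s) + ENNReal.ofReal (η:ℝ) := by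
        rw [ENNReal.ofReal_add (add_nonneg hFt (hIg ε hε0)) NNReal.zero_le_coe,
          ENNReal.ofReal_add hFt (hIg ε hε0)]
    _ ≤ ENNReal.ofReal (t ^ (1-b) * f t)
          + (∫⁻ s in Set.Ioc (0:ℝ) t, ENNReal.ofReal (s ^ (1-b) * g s)) + η := by
        rw [← aux_ofReal t ε (1-b) hε0 g hgc hg0, ENNReal.ofReal_coe_nnreal]
        exact add_le_add_left (add_le_add_right
          (lintegral_mono_set (Set.Ioc_subset_Ioc_left hε0.le)) _) _
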